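/- arXiv:math/0604246 — 2 statements merged into one kernel-verified Lean document; each statement's English description precedes it below -/
import Mathlib

section
/- Suppose a symmetric complexity term C(X,Y) satisfies both C(X,Y) ≤ C(X,Z) + C(Y,Z) − H(Z) and C(X,Z) ≥ max(H(X), H(Z)) for all X, Y, Z (with C(X,Y) ≥ I(X;Y) ≥ 0). Then the normalized divergence NIB(X,Y) = 1 − I(X;Y)/C(X,Y) satisfies the triangle inequality NIB(X,Y) ≤ NIB(X,Z) + NIB(Y,Z). -/
open Real

/-- Shannon entropy of a discrete random variable `X` on a finite probability
space with weights `p`. -/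
noncomputable def ent {Ω S : Type*} [Fintype Ω] [Fintype S] [DecidableEq S]
    (p : Ω → ℝ) (X : Ω → S) : ℝ :=
  ∑ s : S, Real.negMulLog (∑ ω ∈ Finset.univ.filter (fun ω => X ω = s), p ω)

/-- Conditional entropy `H(X|Y) = H(X,Y) - H(Y)`. -/
noncomputable def condEnt {Ω S T : Type*} [Fintype Ω] [Fintype S] [Fintype T]
    [DecidableEq S] [DecidableEq T] (p : Ω → ℝ) (X : Ω → S) (Y : Ω → T) : ℝ :=
  ent p (fun ω => (X ω, Y ω)) - ent p Y

/-- Mutual information `I(X;Y) = H(X) + H(Y) - H(X,Y)`. -/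
noncomputable def mutualInfo {Ω S T : Type*} [Fintype Ω] [Fintype S] [Fintype T]
    [DecidableEq S] [DecidableEq T] (p : Ω → ℝ) (X : Ω → S) (Y : Ω → T) : ℝ :=
  ent p X + ent p Y - ent p (fun ω => (X ω, Y ω))

/- ## Auxiliary lemmas -/

/-- Superadditivity of `negMulLog` on nonnegative reals. -/
lemma negMulLog_sum_le' {ι : Type*} (s : Finset ι) (f : ι → ℝ) (hf : ∀ i ∈ s, 0 ≤ f i) :
    Real.negMulLog (∑ i ∈ s, f i) ≤ ∑ i ∈ s, Real.negMulLog (f i) := by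
  have hS : Real.negMulLog (∑ i ∈ s, f i) = ∑ i ∈ s, (-(f i) * Real.log (∑ j ∈ s, f j)) := by
    rw [Real.negMulLog, ← Finset.sum_neg_distrib, Finset.sum_mul]
  rw [hS]
  refine Finset.sum_le_sum fun i hi => ?_
  rcases eq_or_lt_of_le (hf i hi) with h0 | h0
  · simp [← h0]
  · have hle : f i ≤ ∑ j ∈ s, f j := Finset.single_le_sum hf hi
    have hlog : Real.log (f i) ≤ Real.log (∑ j ∈ s, f j) :=
      Real.log_le_log h0 hle
    have := mul_le_mul_of_nonpos_left hlog (by linarith : -(f i) ≤ 0)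
    simpa [Real.negMulLog, neg_mul] using this

/-- Splitting a filtered sum according to the value of another function. -/
lemma split_sum {Ω U : Type*} [Fintype Ω] [Fintype U] [DecidableEq U]
    (p : Ω → ℝ) (P : Ω → Prop) [DecidablePred P] (W : Ω → U) :
    ∑ ω ∈ Finset.univ.filter (fun ω => P ω), p ω
      = ∑ u, ∑ ω ∈ Finset.univ.filter (fun ω => P ω ∧ W ω = u), p ω := by
  simp_rw [Finset.sum_filter]
  rw [Finset.sum_comm]
  refine Finset.sum_congr rfl fun ω _ => ?_
  by_cases h : P ω
  · simp [h, eq_comm, Finset.sum_ite_eq]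
  · simp [h]

/-- The analytic core of submodularity of entropy. -/
lemma submod_core {S T U : Type*} [Fintype S] [Fintype T] [Fintype U]
    (r : S → T → U → ℝ) (hr : ∀ s t u, 0 ≤ r s t u) :
    (∑ s, ∑ t, ∑ u, Real.negMulLog (r s t u)) + (∑ u, Real.negMulLog (∑ s, ∑ t, r s t u))
      ≤ (∑ s, ∑ u, Real.negMulLog (∑ t, r s t u))
        + (∑ t, ∑ u, Real.negMulLog (∑ s, r s t u)) := by
  set a : S → U → ℝ := fun s u => ∑ t, r s t u with ha_def
  set b : T → U → ℝ := fun t u => ∑ s, r s t u with hb_def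
  set c : U → ℝ := fun u => ∑ s, ∑ t, r s t u with hc_def
  have ha0 : ∀ s u, 0 ≤ a s u := fun s u => Finset.sum_nonneg fun t _ => hr s t u
  have hb0 : ∀ t u, 0 ≤ b t u := fun t u => Finset.sum_nonneg fun s _ => hr s t u
  have hc0 : ∀ u, 0 ≤ c u := fun u => Finset.sum_nonneg fun s _ => ha0 s u
  have hra : ∀ s t u, r s t u ≤ a s u := fun s t u =>
    Finset.single_le_sum (fun t _ => hr s t u) (Finset.mem_univ t)
  have hrb : ∀ s t u, r s t u ≤ b t u := fun s t u =>
    Finset.single_le_sum (fun s _ => hr s t u) (Finset.mem_univ s)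
  have hac : ∀ s u, a s u ≤ c u := fun s u =>
    Finset.single_le_sum (fun s _ => ha0 s u) (Finset.mem_univ s)
  have comm3 : ∀ (f : S → T → U → ℝ),
      ∑ u, ∑ s, ∑ t, f s t u = ∑ s, ∑ t, ∑ u, f s t u := by
    intro f
    rw [Finset.sum_comm]
    exact Finset.sum_congr rfl fun s _ => Finset.sum_comm
  -- pointwise inequality
  have key : ∀ s t u, r s t u - a s u * b t u / c u ≤
      (-(r s t u) * Real.log (a s u)) + (-(r s t u) * Real.log (b t u))
        - ((-(r s t u) * Real.log (r s t u)) + (-(r s t u) * Real.log (c u))) := by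
    intro s t u
    rcases eq_or_lt_of_le (hr s t u) with h0 | h0
    · have hnn : 0 ≤ a s u * b t u / c u :=
        div_nonneg (mul_nonneg (ha0 s u) (hb0 t u)) (hc0 u)
      have hz : r s t u = 0 := h0.symm
      rw [hz]
      simp
      linarith
    · have hA : 0 < a s u := lt_of_lt_of_le h0 (hra s t u)
      have hB : 0 < b t u := lt_of_lt_of_le h0 (hrb s t u)
      have hC : 0 < c u := lt_of_lt_of_le hA (hac s u)
      have hx : 0 < a s u * b t u / (r s t u * c u) :=
        div_pos (mul_pos hA hB) (mul_pos h0 hC)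
      have hlog := Real.log_le_sub_one_of_pos hx
      have hlogeq : Real.log (a s u * b t u / (r s t u * c u))
          = Real.log (a s u) + Real.log (b t u) - (Real.log (r s t u) + Real.log (c u)) := by
        rw [Real.log_div (by positivity) (by positivity),
          Real.log_mul hA.ne' hB.ne', Real.log_mul h0.ne' hC.ne']
      rw [hlogeq] at hlog
      have hmul := mul_le_mul_of_nonneg_left hlog (le_of_lt h0)
      have heq : r s t u * (a s u * b t u / (r s t u * c u) - 1)
          = a s u * b t u / c u - r s t u := by
        field_simp
      rw [heq] at hmul
      nlinarith [hmul]
  -- the correction term sums to zero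
  have habc : ∀ u, ∑ s, ∑ t, a s u * b t u / c u = c u := by
    intro u
    have : (∑ s, a s u) * (∑ t, b t u) / c u = ∑ s, ∑ t, a s u * b t u / c u := by
      rw [Finset.sum_mul_sum, Finset.sum_div]
      exact Finset.sum_congr rfl fun s _ => by rw [Finset.sum_div]
    rw [← this]
    have h1 : ∑ s, a s u = c u := rfl
    have h2 : ∑ t, b t u = c u := by
      rw [hc_def]
      exact (Finset.sum_comm).symm
    rw [h1, h2]
    rcases eq_or_lt_of_le (hc0 u) with h0 | h0
    · simp [← h0]
    · field_simp
  -- rewrite the entropy-like sums as triple sums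
  have e1 : ∑ s, ∑ u, Real.negMulLog (a s u)
      = ∑ s, ∑ t, ∑ u, (-(r s t u) * Real.log (a s u)) := by
    refine Finset.sum_congr rfl fun s _ => ?_
    rw [Finset.sum_comm]
    refine Finset.sum_congr rfl fun u _ => ?_
    rw [Real.negMulLog, ← Finset.sum_neg_distrib, Finset.sum_mul]
  have e2 : ∑ t, ∑ u, Real.negMulLog (b t u)
      = ∑ s, ∑ t, ∑ u, (-(r s t u) * Real.log (b t u)) := by
    have step : ∀ t, ∑ u, Real.negMulLog (b t u)
        = ∑ u, ∑ s, (-(r s t u) * Real.log (b t u)) := by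
      intro t
      refine Finset.sum_congr rfl fun u _ => ?_
      rw [Real.negMulLog, ← Finset.sum_neg_distrib, Finset.sum_mul]
    calc ∑ t, ∑ u, Real.negMulLog (b t u)
        = ∑ t, ∑ u, ∑ s, (-(r s t u) * Real.log (b t u)) :=
          Finset.sum_congr rfl fun t _ => step t
      _ = ∑ t, ∑ s, ∑ u, (-(r s t u) * Real.log (b t u)) :=
          Finset.sum_congr rfl fun t _ => Finset.sum_comm
      _ = ∑ s, ∑ t, ∑ u, (-(r s t u) * Real.log (b t u)) := Finset.sum_comm
  have e3 : ∑ u, Real.negMulLog (c u)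
      = ∑ s, ∑ t, ∑ u, (-(r s t u) * Real.log (c u)) := by
    have : ∀ u, Real.negMulLog (c u) = ∑ s, ∑ t, (-(r s t u) * Real.log (c u)) := by
      intro u
      rw [Real.negMulLog, ← Finset.sum_neg_distrib, Finset.sum_mul]
      refine Finset.sum_congr rfl fun s _ => ?_
      rw [← Finset.sum_neg_distrib, Finset.sum_mul]
    calc ∑ u, Real.negMulLog (c u) = ∑ u, ∑ s, ∑ t, (-(r s t u) * Real.log (c u)) :=
          Finset.sum_congr rfl fun u _ => this u
      _ = ∑ s, ∑ t, ∑ u, (-(r s t u) * Real.log (c u)) :=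
          comm3 (fun s t u => -(r s t u) * Real.log (c u))
  have e4 : ∑ s, ∑ t, ∑ u, Real.negMulLog (r s t u)
      = ∑ s, ∑ t, ∑ u, (-(r s t u) * Real.log (r s t u)) := by
    refine Finset.sum_congr rfl fun s _ => Finset.sum_congr rfl fun t _ =>
      Finset.sum_congr rfl fun u _ => ?_
    rw [Real.negMulLog]
  have main : (0:ℝ) ≤ (∑ s, ∑ t, ∑ u, (-(r s t u) * Real.log (a s u)))
      + (∑ s, ∑ t, ∑ u, (-(r s t u) * Real.log (b t u)))
      - ((∑ s, ∑ t, ∑ u, (-(r s t u) * Real.log (r s t u)))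
        + (∑ s, ∑ t, ∑ u, (-(r s t u) * Real.log (c u)))) := by
    have hsum : ∑ s, ∑ t, ∑ u, (r s t u - a s u * b t u / c u) = 0 := by
      have : ∀ s t u, (r s t u - a s u * b t u / c u)
          = r s t u - a s u * b t u / c u := fun _ _ _ => rfl
      rw [← comm3 (fun s t u => r s t u - a s u * b t u / c u)]
      have : ∀ u, ∑ s, ∑ t, (r s t u - a s u * b t u / c u) = 0 := by
        intro u
        simp_rw [Finset.sum_sub_distrib]
        rw [habc u]
        have : ∑ s, ∑ t, r s t u = c u := rfl
        rw [this, sub_self]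
      exact Finset.sum_eq_zero fun u _ => this u
    have hle : ∑ s, ∑ t, ∑ u, (r s t u - a s u * b t u / c u)
        ≤ ∑ s, ∑ t, ∑ u, ((-(r s t u) * Real.log (a s u)) + (-(r s t u) * Real.log (b t u))
          - ((-(r s t u) * Real.log (r s t u)) + (-(r s t u) * Real.log (c u)))) := by
      refine Finset.sum_le_sum fun s _ => Finset.sum_le_sum fun t _ =>
        Finset.sum_le_sum fun u _ => key s t u
    rw [hsum] at hle
    simp_rw [Finset.sum_sub_distrib, Finset.sum_add_distrib] at hle
    linarith
  rw [e4, e3, e1, e2]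
  linarith

/-- Submodularity + monotonicity of entropy: `H(X,Y) + H(Z) ≤ H(X,Z) + H(Y,Z)`. -/
lemma ent_submod {Ω S T U : Type*} [Fintype Ω] [Fintype S] [Fintype T] [Fintype U]
    [DecidableEq S] [DecidableEq T] [DecidableEq U]
    (p : Ω → ℝ) (hp0 : ∀ ω, 0 ≤ p ω) (A : Ω → S) (B : Ω → T) (C : Ω → U) :
    ent p (fun ω => (A ω, B ω)) + ent p C
      ≤ ent p (fun ω => (A ω, C ω)) + ent p (fun ω => (B ω, C ω)) := by
  set r : S → T → U → ℝ := fun s t u =>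
    ∑ ω ∈ Finset.univ.filter (fun ω => A ω = s ∧ B ω = t ∧ C ω = u), p ω with hr_def
  have hr0 : ∀ s t u, 0 ≤ r s t u := fun s t u => Finset.sum_nonneg fun ω _ => hp0 ω
  have bAB : ∀ s t, (∑ ω ∈ Finset.univ.filter (fun ω => (A ω, B ω) = (s, t)), p ω)
      = ∑ u, r s t u := by
    intro s t
    have h1 : Finset.univ.filter (fun ω => (A ω, B ω) = (s, t))
        = Finset.univ.filter (fun ω => A ω = s ∧ B ω = t) :=
      Finset.filter_congr fun ω _ => by simp [Prod.ext_iff]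
    rw [h1, split_sum p _ C]
    refine Finset.sum_congr rfl fun u _ => ?_
    refine Finset.sum_congr (Finset.filter_congr fun ω _ => by tauto) fun _ _ => rfl
  have bAC : ∀ s u, (∑ ω ∈ Finset.univ.filter (fun ω => (A ω, C ω) = (s, u)), p ω)
      = ∑ t, r s t u := by
    intro s u
    have h1 : Finset.univ.filter (fun ω => (A ω, C ω) = (s, u))
        = Finset.univ.filter (fun ω => A ω = s ∧ C ω = u) :=
      Finset.filter_congr fun ω _ => by simp [Prod.ext_iff]
    rw [h1, split_sum p _ B]
    refine Finset.sum_congr rfl fun t _ => ?_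
    refine Finset.sum_congr (Finset.filter_congr fun ω _ => by tauto) fun _ _ => rfl
  have bBC : ∀ t u, (∑ ω ∈ Finset.univ.filter (fun ω => (B ω, C ω) = (t, u)), p ω)
      = ∑ s, r s t u := by
    intro t u
    have h1 : Finset.univ.filter (fun ω => (B ω, C ω) = (t, u))
        = Finset.univ.filter (fun ω => B ω = t ∧ C ω = u) :=
      Finset.filter_congr fun ω _ => by simp [Prod.ext_iff]
    rw [h1, split_sum p _ A]
    refine Finset.sum_congr rfl fun s _ => ?_
    refine Finset.sum_congr (Finset.filter_congr fun ω _ => by tauto) fun _ _ => rfl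
  have bC : ∀ u, (∑ ω ∈ Finset.univ.filter (fun ω => C ω = u), p ω)
      = ∑ s, ∑ t, r s t u := by
    intro u
    rw [split_sum p _ A]
    refine Finset.sum_congr rfl fun s _ => ?_
    rw [split_sum p _ B]
    refine Finset.sum_congr rfl fun t _ => ?_
    refine Finset.sum_congr (Finset.filter_congr fun ω _ => by tauto) fun _ _ => rfl
  have eAB : ent p (fun ω => (A ω, B ω)) = ∑ s, ∑ t, Real.negMulLog (∑ u, r s t u) := by
    rw [ent, Fintype.sum_prod_type]
    exact Finset.sum_congr rfl fun s _ => Finset.sum_congr rfl fun t _ => by rw [bAB s t]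
  have eAC : ent p (fun ω => (A ω, C ω)) = ∑ s, ∑ u, Real.negMulLog (∑ t, r s t u) := by
    rw [ent, Fintype.sum_prod_type]
    exact Finset.sum_congr rfl fun s _ => Finset.sum_congr rfl fun u _ => by rw [bAC s u]
  have eBC : ent p (fun ω => (B ω, C ω)) = ∑ t, ∑ u, Real.negMulLog (∑ s, r s t u) := by
    rw [ent, Fintype.sum_prod_type]
    exact Finset.sum_congr rfl fun t _ => Finset.sum_congr rfl fun u _ => by rw [bBC t u]
  have eC : ent p C = ∑ u, Real.negMulLog (∑ s, ∑ t, r s t u) := by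
    rw [ent]
    exact Finset.sum_congr rfl fun u _ => by rw [bC u]
  have mono : ∑ s, ∑ t, Real.negMulLog (∑ u, r s t u)
      ≤ ∑ s, ∑ t, ∑ u, Real.negMulLog (r s t u) := by
    refine Finset.sum_le_sum fun s _ => Finset.sum_le_sum fun t _ => ?_
    exact negMulLog_sum_le' _ _ fun u _ => hr0 s t u
  have sub := submod_core r hr0
  rw [eAB, eAC, eBC, eC]
  linarith

/-- The key mutual-information inequality `I(X;Y) ≥ I(X;Z) + I(Y;Z) - H(Z)`. -/
lemma mutual_key {Ω S : Type*} [Fintype Ω] [Fintype S] [DecidableEq S]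
    (p : Ω → ℝ) (hp0 : ∀ ω, 0 ≤ p ω) (X Y Z : Ω → S) :
    mutualInfo p X Z + mutualInfo p Y Z - ent p Z ≤ mutualInfo p X Y := by
  have h := ent_submod p hp0 X Y Z
  unfold mutualInfo
  linarith

/-- The purely algebraic part of the triangle inequality. -/
lemma alg_triangle (a b c A B D h : ℝ) (hc0 : 0 ≤ c) (haA : a ≤ A) (hbB : b ≤ B)
    (hA : 0 < A) (hB : 0 < B) (hD : 0 < D) (hhA : h ≤ A) (hhB : h ≤ B)
    (hkey : a + b - h ≤ c) (hsubD : D ≤ A + B - h) (hcD : c ≤ D) :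
    1 - c / D ≤ (1 - a / A) + (1 - b / B) := by
  have hα : 0 ≤ A - a := by linarith
  have hβ : 0 ≤ B - b := by linarith
  have hSe : 0 < (A - a) + (B - b) + (a + b - h) := by linarith
  have hSc : 0 < (A - a) + (B - b) + c := by linarith
  have step1 : (D - c) / D ≤ ((A - a) + (B - b)) / ((A - a) + (B - b) + c) := by
    rw [div_le_div_iff₀ hD hSc]
    nlinarith [mul_nonneg hc0 (by linarith : (0:ℝ) ≤ (A - a) + (B - b) - (D - c))]
  have step2 : ((A - a) + (B - b)) / ((A - a) + (B - b) + c)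
      ≤ ((A - a) + (B - b)) / ((A - a) + (B - b) + (a + b - h)) :=
    div_le_div_of_nonneg_left (by linarith) hSe (by linarith)
  have step3 : ((A - a) + (B - b)) / ((A - a) + (B - b) + (a + b - h))
      ≤ (A - a) / A + (B - b) / B := by
    have h3a : (A - a) / ((A - a) + (B - b) + (a + b - h)) ≤ (A - a) / A :=
      div_le_div_of_nonneg_left hα hA (by linarith)
    have h3b : (B - b) / ((A - a) + (B - b) + (a + b - h)) ≤ (B - b) / B :=
      div_le_div_of_nonneg_left hβ hB (by linarith)
    rw [add_div]
    linarith
  have hDne : (D - c) / D = 1 - c / D := by field_simp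
  have hAne : (A - a) / A = 1 - a / A := by field_simp
  have hBne : (B - b) / B = 1 - b / B := by field_simp
  rw [← hDne, ← hAne, ← hBne]
  linarith

theorem nibd_triangle {Ω S : Type*} [Fintype Ω] [Fintype S] [DecidableEq S]
    (p : Ω → ℝ) (hp0 : ∀ ω, 0 ≤ p ω) (hp1 : ∑ ω, p ω = 1)
    (C : (Ω → S) → (Ω → S) → ℝ)
    (hsym : ∀ X Y : Ω → S, C X Y = C Y X)
    (hsub : ∀ X Y Z : Ω → S, C X Y ≤ C X Z + C Y Z - ent p Z)
    (hmax : ∀ X Z : Ω → S, C X Z ≥ max (ent p X) (ent p Z))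
    (hCI : ∀ X Y : Ω → S, mutualInfo p X Y ≤ C X Y)
    (hI0 : ∀ X Y : Ω → S, 0 ≤ mutualInfo p X Y)
    (hCpos : ∀ X Y : Ω → S, 0 < C X Y)
    (X Y Z : Ω → S) :
    1 - mutualInfo p X Y / C X Y ≤
      (1 - mutualInfo p X Z / C X Z) + (1 - mutualInfo p Y Z / C Y Z) := by
  have hkey := mutual_key p hp0 X Y Z
  have hhA : ent p Z ≤ C X Z := le_trans (le_max_right _ _) (hmax X Z)
  have hhB : ent p Z ≤ C Y Z := le_trans (le_max_right _ _) (hmax Y Z)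
  exact alg_triangle (mutualInfo p X Z) (mutualInfo p Y Z) (mutualInfo p X Y)
    (C X Z) (C Y Z) (C X Y) (ent p Z)
    (hI0 X Y) (hCI X Z) (hCI Y Z) (hCpos X Z) (hCpos Y Z) (hCpos X Y)
    hhA hhB hkey (hsub X Y Z) (hCI X Y)
end

section
/- For 0 ≤ α ≤ 1/2, the divergence D^{S,α}(X,Y) = α·min(H(X|Y),H(Y|X)) + (1−α)·max(H(X|Y),H(Y|X)) satisfies the triangle inequality D^{S,α}(X,Y) ≤ D^{S,α}(X,Z) + D^{S,α}(Y,Z). -/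
open Real

/-- The divergence `D^{S,α}`. -/
noncomputable def DS {Ω S T : Type*} [Fintype Ω] [Fintype S] [Fintype T]
    [DecidableEq S] [DecidableEq T] (α : ℝ) (p : Ω → ℝ) (X : Ω → S) (Y : Ω → T) : ℝ :=
  α * min (condEnt p X Y) (condEnt p Y X) + (1 - α) * max (condEnt p X Y) (condEnt p Y X)

/- ------------------ auxiliary lemmas ------------------ -/

lemma aux_sum3_comm₁ {A B C M : Type*} [Fintype A] [Fintype B] [Fintype C] [AddCommMonoid M]
    (f : A → B → C → M) :
    ∑ c : C, ∑ a : A, ∑ b : B, f a b c = ∑ a : A, ∑ b : B, ∑ c : C, f a b c := by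
  rw [Finset.sum_comm]
  exact Finset.sum_congr rfl fun a _ => Finset.sum_comm

lemma aux_sum3_comm₂ {A B C M : Type*} [Fintype A] [Fintype B] [Fintype C] [AddCommMonoid M]
    (f : A → B → C → M) :
    ∑ b : B, ∑ c : C, ∑ a : A, f a b c = ∑ a : A, ∑ b : B, ∑ c : C, f a b c := by
  calc ∑ b : B, ∑ c : C, ∑ a : A, f a b c
      = ∑ b : B, ∑ a : A, ∑ c : C, f a b c :=
        Finset.sum_congr rfl fun b _ => Finset.sum_comm
    _ = ∑ a : A, ∑ b : B, ∑ c : C, f a b c := Finset.sum_comm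

lemma aux_negMulLog_eq_sum {ι : Type*} [Fintype ι] (f : ι → ℝ) (r : ℝ) (h : r = ∑ i, f i) :
    Real.negMulLog r = ∑ i, -(f i * Real.log r) := by
  calc Real.negMulLog r = -∑ i, f i * Real.log r := by
        rw [← Finset.sum_mul, ← h, Real.negMulLog, neg_mul]
    _ = ∑ i, -(f i * Real.log r) := (Finset.sum_neg_distrib _).symm

lemma aux_negMulLog_sum_le {ι : Type*} [Fintype ι] (f : ι → ℝ) (hf : ∀ i, 0 ≤ f i) :
    Real.negMulLog (∑ i, f i) ≤ ∑ i, Real.negMulLog (f i) := by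
  rw [aux_negMulLog_eq_sum f _ rfl]
  refine Finset.sum_le_sum fun i _ => ?_
  rcases eq_or_lt_of_le (hf i) with h | h
  · rw [← h]; simp
  · rw [Real.negMulLog, neg_mul, neg_le_neg_iff]
    refine mul_le_mul_of_nonneg_left ?_ (hf i)
    exact Real.log_le_log h (Finset.single_le_sum (fun j _ => hf j) (Finset.mem_univ i))

lemma aux_key_term {q a b c : ℝ} (hq : 0 ≤ q) (ha : q ≤ a) (hb : q ≤ b) (hc : q ≤ c) :
    q * (Real.log a + Real.log b - Real.log c - Real.log q) ≤ a * b / c - q := by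
  rcases eq_or_lt_of_le hq with h | h
  · rw [← h]
    have ha0 : 0 ≤ a := le_trans hq ha
    have hb0 : 0 ≤ b := le_trans hq hb
    have hc0 : 0 ≤ c := le_trans hq hc
    simpa using div_nonneg (mul_nonneg ha0 hb0) hc0
  · have ha' : 0 < a := lt_of_lt_of_le h ha
    have hb' : 0 < b := lt_of_lt_of_le h hb
    have hc' : 0 < c := lt_of_lt_of_le h hc
    have hx : 0 < a * b / (c * q) := by positivity
    have hlog := Real.log_le_sub_one_of_pos hx
    have heq : Real.log (a * b / (c * q))
        = Real.log a + Real.log b - Real.log c - Real.log q := by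
      rw [Real.log_div (by positivity) (by positivity), Real.log_mul ha'.ne' hb'.ne',
        Real.log_mul hc'.ne' h.ne']
      ring
    have h2 : q * (Real.log a + Real.log b - Real.log c - Real.log q)
        ≤ q * (a * b / (c * q) - 1) := by
      rw [← heq]; exact mul_le_mul_of_nonneg_left hlog hq
    have h3 : q * (a * b / (c * q) - 1) = a * b / c - q := by
      field_simp
    linarith

/-- Submodularity: `H(X,Z) + H(Y,Z) ≥ H(X,Y,Z) + H(Z)` in terms of raw weights. -/
lemma aux_submod {A B C : Type*} [Fintype A] [Fintype B] [Fintype C]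
    (q : A → B → C → ℝ) (hq : ∀ a b c, 0 ≤ q a b c) :
    (∑ a : A, ∑ b : B, ∑ c : C, Real.negMulLog (q a b c))
      + ∑ c : C, Real.negMulLog (∑ a : A, ∑ b : B, q a b c)
    ≤ (∑ a : A, ∑ c : C, Real.negMulLog (∑ b : B, q a b c))
      + ∑ b : B, ∑ c : C, Real.negMulLog (∑ a : A, q a b c) := by
  set mA : A → C → ℝ := fun a c => ∑ b, q a b c with hmA
  set mB : B → C → ℝ := fun b c => ∑ a, q a b c with hmB
  set mC : C → ℝ := fun c => ∑ a, ∑ b, q a b c with hmC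
  have hmA0 : ∀ a c, 0 ≤ mA a c := fun a c => Finset.sum_nonneg fun b _ => hq a b c
  have hmB0 : ∀ b c, 0 ≤ mB b c := fun b c => Finset.sum_nonneg fun a _ => hq a b c
  have hqA : ∀ a b c, q a b c ≤ mA a c := fun a b c =>
    Finset.single_le_sum (fun b _ => hq a b c) (Finset.mem_univ b)
  have hqB : ∀ a b c, q a b c ≤ mB b c := fun a b c =>
    Finset.single_le_sum (f := fun a => q a b c) (fun a _ => hq a b c) (Finset.mem_univ a)
  have hAC : ∀ a c, mA a c ≤ mC c := fun a c =>
    Finset.single_le_sum (f := fun a => mA a c) (fun a _ => hmA0 a c) (Finset.mem_univ a)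
  have hqC : ∀ a b c, q a b c ≤ mC c := fun a b c => le_trans (hqA a b c) (hAC a c)
  -- the key log-sum inequality
  have key : (∑ a : A, ∑ b : B, ∑ c : C, q a b c * Real.log (mA a c))
      + (∑ a : A, ∑ b : B, ∑ c : C, q a b c * Real.log (mB b c))
      - (∑ a : A, ∑ b : B, ∑ c : C, q a b c * Real.log (mC c))
      - (∑ a : A, ∑ b : B, ∑ c : C, q a b c * Real.log (q a b c)) ≤ 0 := by
    have hsplit : (∑ a : A, ∑ b : B, ∑ c : C, q a b c *
          (Real.log (mA a c) + Real.log (mB b c) - Real.log (mC c) - Real.log (q a b c)))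
        = (∑ a : A, ∑ b : B, ∑ c : C, q a b c * Real.log (mA a c))
          + (∑ a : A, ∑ b : B, ∑ c : C, q a b c * Real.log (mB b c))
          - (∑ a : A, ∑ b : B, ∑ c : C, q a b c * Real.log (mC c))
          - (∑ a : A, ∑ b : B, ∑ c : C, q a b c * Real.log (q a b c)) := by
      simp only [mul_add, mul_sub, Finset.sum_add_distrib, Finset.sum_sub_distrib]
    rw [← hsplit]
    have step1 : (∑ a : A, ∑ b : B, ∑ c : C, q a b c *
          (Real.log (mA a c) + Real.log (mB b c) - Real.log (mC c) - Real.log (q a b c)))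
        ≤ ∑ a : A, ∑ b : B, ∑ c : C, (mA a c * mB b c / mC c - q a b c) :=
      Finset.sum_le_sum fun a _ => Finset.sum_le_sum fun b _ => Finset.sum_le_sum fun c _ =>
        aux_key_term (hq a b c) (hqA a b c) (hqB a b c) (hqC a b c)
    have step2 : (∑ a : A, ∑ b : B, ∑ c : C, (mA a c * mB b c / mC c - q a b c)) = 0 := by
      rw [← aux_sum3_comm₁]
      refine Finset.sum_eq_zero fun c _ => ?_
      have hSB : ∑ b, mB b c = mC c := Finset.sum_comm
      simp only [Finset.sum_sub_distrib]
      have h1 : ∑ a, ∑ b, mA a c * mB b c / mC c = mC c := by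
        have hrow : ∀ a, ∑ b, mA a c * mB b c / mC c = mA a c * mC c / mC c := by
          intro a
          rw [← Finset.sum_div, ← Finset.mul_sum, hSB]
        rw [Finset.sum_congr rfl fun a _ => hrow a]
        rcases eq_or_ne (mC c) 0 with h0 | h0
        · have hz : ∀ a, mA a c = 0 := fun a => le_antisymm (h0 ▸ hAC a c) (hmA0 a c)
          simp [hz, h0]
        · have : ∀ a, mA a c * mC c / mC c = mA a c := fun a => by
            rw [mul_div_assoc, div_self h0, mul_one]
          rw [Finset.sum_congr rfl fun a _ => this a]
      have h2 : ∑ a, ∑ b, q a b c = mC c := rfl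
      rw [h1, h2, sub_self]
    exact le_trans step1 (le_of_eq step2)
  -- express the entropy sums via the key sums
  have eA : (∑ a : A, ∑ c : C, Real.negMulLog (mA a c))
      = -(∑ a : A, ∑ b : B, ∑ c : C, q a b c * Real.log (mA a c)) := by
    rw [← Finset.sum_neg_distrib]
    refine Finset.sum_congr rfl fun a _ => ?_
    calc ∑ c, Real.negMulLog (mA a c)
        = ∑ c, ∑ b, -(q a b c * Real.log (mA a c)) :=
          Finset.sum_congr rfl fun c _ => aux_negMulLog_eq_sum _ _ rfl
      _ = ∑ b, ∑ c, -(q a b c * Real.log (mA a c)) := Finset.sum_comm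
      _ = -∑ b, ∑ c, q a b c * Real.log (mA a c) := by
          simp only [Finset.sum_neg_distrib]
  have eB : (∑ b : B, ∑ c : C, Real.negMulLog (mB b c))
      = -(∑ a : A, ∑ b : B, ∑ c : C, q a b c * Real.log (mB b c)) := by
    have : (∑ b : B, ∑ c : C, Real.negMulLog (mB b c))
        = ∑ b : B, ∑ c : C, ∑ a : A, -(q a b c * Real.log (mB b c)) :=
      Finset.sum_congr rfl fun b _ => Finset.sum_congr rfl fun c _ =>
        aux_negMulLog_eq_sum _ _ rfl
    rw [this, aux_sum3_comm₂ (fun a b c => -(q a b c * Real.log (mB b c)))]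
    simp only [Finset.sum_neg_distrib]
  have eC : (∑ c : C, Real.negMulLog (mC c))
      = -(∑ a : A, ∑ b : B, ∑ c : C, q a b c * Real.log (mC c)) := by
    have : (∑ c : C, Real.negMulLog (mC c))
        = ∑ c : C, ∑ a : A, ∑ b : B, -(q a b c * Real.log (mC c)) := by
      refine Finset.sum_congr rfl fun c _ => ?_
      calc Real.negMulLog (mC c)
          = ∑ a, -(mA a c * Real.log (mC c)) := aux_negMulLog_eq_sum _ _ rfl
        _ = ∑ a, ∑ b, -(q a b c * Real.log (mC c)) := by
            refine Finset.sum_congr rfl fun a _ => ?_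
            rw [Finset.sum_neg_distrib, ← Finset.sum_mul]
    rw [this, aux_sum3_comm₁ (fun a b c => -(q a b c * Real.log (mC c)))]
    simp only [Finset.sum_neg_distrib]
  have eQ : (∑ a : A, ∑ b : B, ∑ c : C, Real.negMulLog (q a b c))
      = -(∑ a : A, ∑ b : B, ∑ c : C, q a b c * Real.log (q a b c)) := by
    simp only [Real.negMulLog_eq_neg, Finset.sum_neg_distrib]
  rw [eA, eB, eC, eQ]
  linarith [key]

/-- Split a sum over a fiber according to the values of another map. -/
lemma aux_mass_split {Ω V : Type*} [Fintype Ω] [Fintype V] [DecidableEq V]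
    (p : Ω → ℝ) (W : Ω → V) (P : Ω → Prop) [DecidablePred P] :
    ∑ ω ∈ Finset.univ.filter (fun ω => P ω), p ω
      = ∑ v : V, ∑ ω ∈ Finset.univ.filter (fun ω => P ω ∧ W ω = v), p ω := by
  rw [← Finset.sum_fiberwise (Finset.univ.filter fun ω => P ω) W p]
  refine Finset.sum_congr rfl fun v _ => ?_
  rw [Finset.filter_filter]

lemma aux_ent_swap {Ω S T : Type*} [Fintype Ω] [Fintype S] [Fintype T]
    [DecidableEq S] [DecidableEq T] (p : Ω → ℝ) (X : Ω → S) (Y : Ω → T) :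
    ent p (fun ω => (Y ω, X ω)) = ent p (fun ω => (X ω, Y ω)) := by
  unfold ent
  refine Fintype.sum_equiv (Equiv.prodComm T S) _ _ fun ts => ?_
  congr 1
  refine Finset.sum_congr ?_ fun _ _ => rfl
  apply Finset.filter_congr
  intro ω _
  simp only [Prod.ext_iff, Equiv.prodComm_apply, Prod.fst_swap, Prod.snd_swap]
  tauto

/-- Triangle-like min/max identity: `α min + (1-α) max = avg + (1/2 - α)|diff|`. -/
lemma aux_minmax (α x y : ℝ) :
    α * min x y + (1 - α) * max x y = (x + y) / 2 + (1 / 2 - α) * |x - y| := by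
  rcases le_total x y with h | h
  · rw [min_eq_left h, max_eq_right h, abs_of_nonpos (by linarith)]
    ring
  · rw [min_eq_right h, max_eq_left h, abs_of_nonneg (by linarith)]
    ring

theorem DS_triangle {Ω S T U : Type*} [Fintype Ω] [Fintype S] [Fintype T] [Fintype U]
    [DecidableEq S] [DecidableEq T] [DecidableEq U]
    (p : Ω → ℝ) (hp0 : ∀ ω, 0 ≤ p ω) (hp1 : ∑ ω, p ω = 1)
    (α : ℝ) (hα0 : 0 ≤ α) (hα : α ≤ 1 / 2)
    (X : Ω → S) (Y : Ω → T) (Z : Ω → U) :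
    DS α p X Y ≤ DS α p X Z + DS α p Y Z := by
  classical
  -- joint weights
  set q : S → T → U → ℝ := fun x y z =>
    ∑ ω ∈ Finset.univ.filter (fun ω => X ω = x ∧ Y ω = y ∧ Z ω = z), p ω with hqdef
  have hq : ∀ x y z, 0 ≤ q x y z := fun x y z => Finset.sum_nonneg fun ω _ => hp0 ω
  -- a reusable filter-congruence step
  have hfc : ∀ (P Q : Ω → Prop) [DecidablePred P] [DecidablePred Q], (∀ ω, P ω ↔ Q ω) →
      ∑ ω ∈ Finset.univ.filter P, p ω = ∑ ω ∈ Finset.univ.filter Q, p ω := by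
    intro P Q _ _ h
    refine Finset.sum_congr ?_ fun _ _ => rfl
    exact Finset.filter_congr fun ω _ => h ω
  -- marginal identities
  have hXZ : ent p (fun ω => (X ω, Z ω)) = ∑ x, ∑ z, Real.negMulLog (∑ y, q x y z) := by
    unfold ent
    rw [Fintype.sum_prod_type]
    refine Finset.sum_congr rfl fun x _ => Finset.sum_congr rfl fun z _ => ?_
    congr 1
    rw [hfc (fun ω => (X ω, Z ω) = (x, z)) (fun ω => X ω = x ∧ Z ω = z)
      (fun ω => by simp [Prod.ext_iff]),
      aux_mass_split p Y (fun ω => X ω = x ∧ Z ω = z)]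
    exact Finset.sum_congr rfl fun y _ => hfc _ _ (fun ω => by tauto)
  have hYZ : ent p (fun ω => (Y ω, Z ω)) = ∑ y, ∑ z, Real.negMulLog (∑ x, q x y z) := by
    unfold ent
    rw [Fintype.sum_prod_type]
    refine Finset.sum_congr rfl fun y _ => Finset.sum_congr rfl fun z _ => ?_
    congr 1
    rw [hfc (fun ω => (Y ω, Z ω) = (y, z)) (fun ω => Y ω = y ∧ Z ω = z)
      (fun ω => by simp [Prod.ext_iff]),
      aux_mass_split p X (fun ω => Y ω = y ∧ Z ω = z)]
    exact Finset.sum_congr rfl fun x _ => hfc _ _ (fun ω => by tauto)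
  have hXY : ent p (fun ω => (X ω, Y ω)) = ∑ x, ∑ y, Real.negMulLog (∑ z, q x y z) := by
    unfold ent
    rw [Fintype.sum_prod_type]
    refine Finset.sum_congr rfl fun x _ => Finset.sum_congr rfl fun y _ => ?_
    congr 1
    rw [hfc (fun ω => (X ω, Y ω) = (x, y)) (fun ω => X ω = x ∧ Y ω = y)
      (fun ω => by simp [Prod.ext_iff]),
      aux_mass_split p Z (fun ω => X ω = x ∧ Y ω = y)]
    exact Finset.sum_congr rfl fun z _ => hfc _ _ (fun ω => by tauto)
  have hZm : ent p Z = ∑ z, Real.negMulLog (∑ x, ∑ y, q x y z) := by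
    unfold ent
    refine Finset.sum_congr rfl fun z _ => ?_
    congr 1
    rw [aux_mass_split p X (fun ω => Z ω = z)]
    refine Finset.sum_congr rfl fun x _ => ?_
    rw [aux_mass_split p Y (fun ω => Z ω = z ∧ X ω = x)]
    exact Finset.sum_congr rfl fun y _ => hfc _ _ (fun ω => by tauto)
  -- monotonicity: H(X,Y) ≤ H(X,Y,Z)
  have hmono : ent p (fun ω => (X ω, Y ω))
      ≤ ∑ x, ∑ y, ∑ z, Real.negMulLog (q x y z) := by
    rw [hXY]
    exact Finset.sum_le_sum fun x _ => Finset.sum_le_sum fun y _ =>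
      aux_negMulLog_sum_le _ (fun z => hq x y z)
  -- submodularity
  have hsubm := aux_submod q hq
  have hsub : ent p (fun ω => (X ω, Y ω)) + ent p Z
      ≤ ent p (fun ω => (X ω, Z ω)) + ent p (fun ω => (Y ω, Z ω)) := by
    rw [hXZ, hYZ, hZm]
    linarith [hsubm, hmono]
  -- unfold DS into entropies
  simp only [DS, condEnt, aux_ent_swap p X Y, aux_ent_swap p X Z, aux_ent_swap p Y Z]
  rw [aux_minmax α (ent p (fun ω => (X ω, Y ω)) - ent p Y)
      (ent p (fun ω => (X ω, Y ω)) - ent p X),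
    aux_minmax α (ent p (fun ω => (X ω, Z ω)) - ent p Z)
      (ent p (fun ω => (X ω, Z ω)) - ent p X),
    aux_minmax α (ent p (fun ω => (Y ω, Z ω)) - ent p Z)
      (ent p (fun ω => (Y ω, Z ω)) - ent p Y)]
  have habs1 : |ent p (fun ω => (X ω, Y ω)) - ent p Y - (ent p (fun ω => (X ω, Y ω)) - ent p X)|
      = |ent p X - ent p Y| := by congr 1; ring
  have habs2 : |ent p (fun ω => (X ω, Z ω)) - ent p Z - (ent p (fun ω => (X ω, Z ω)) - ent p X)|
      = |ent p X - ent p Z| := by congr 1; ring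
  have habs3 : |ent p (fun ω => (Y ω, Z ω)) - ent p Z - (ent p (fun ω => (Y ω, Z ω)) - ent p Y)|
      = |ent p Y - ent p Z| := by congr 1; ring
  rw [habs1, habs2, habs3]
  have htri : |ent p X - ent p Y| ≤ |ent p X - ent p Z| + |ent p Z - ent p Y| :=
    abs_sub_le _ _ _
  have habs4 : |ent p Z - ent p Y| = |ent p Y - ent p Z| := abs_sub_comm _ _
  have hβ : (0:ℝ) ≤ 1 / 2 - α := by linarith
  have hmul : (1 / 2 - α) * |ent p X - ent p Y|
      ≤ (1 / 2 - α) * (|ent p X - ent p Z| + |ent p Y - ent p Z|) := by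
    apply mul_le_mul_of_nonneg_left _ hβ
    rw [← habs4]; exact htri
  nlinarith [hsub, hmul]
end
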